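/- Let n ≥ 1 and work in EuclideanSpace ℝ (Fin n). Let σ̲ > 0 and δ̃ ≥ 0, and let q : ℝ → ℝⁿ be a differentiable function such that for all t ≥ 0, ⟪q(t), q'(t)⟫ ≤ (δ̃ − σ̲ ‖q(t)‖) ‖q(t)‖. If ‖q(0)‖ ≤ δ̃/σ̲, then ‖q(t)‖ ≤ δ̃/σ̲ for all t ≥ 0. -/

import Mathlib

open scoped RealInnerProductSpace

/-- **Invariance step concluding the proof of Lemma 1**: if a differentiable curve
`q : ℝ → ℝⁿ` satisfies `⟪q(t), q'(t)⟫ ≤ (δ̃ − σ̲‖q(t)‖)‖q(t)‖` for all `t ≥ 0` and starts in the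
ball of radius `δ̃/σ̲`, then it remains in that ball for all `t ≥ 0`. -/
theorem tube_ball_invariance
    (n : ℕ) (hn : 1 ≤ n) (σlow δtilde : ℝ)
    (hσlow : 0 < σlow) (hδtilde : 0 ≤ δtilde)
    (q : ℝ → EuclideanSpace ℝ (Fin n))
    (hq : Differentiable ℝ q)
    (hineq : ∀ t : ℝ, 0 ≤ t →
      ⟪q t, deriv q t⟫ ≤ (δtilde - σlow * ‖q t‖) * ‖q t‖)
    (h0 : ‖q 0‖ ≤ δtilde / σlow) :
    ∀ t : ℝ, 0 ≤ t → ‖q t‖ ≤ δtilde / σlow := by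
  set r : ℝ := δtilde / σlow with hr
  have hr0 : 0 ≤ r := div_nonneg hδtilde hσlow.le
  have hσr : σlow * r = δtilde := by
    rw [hr]; field_simp [hσlow.ne']
  set g : ℝ → ℝ := fun t => ⟪q t, q t⟫ with hg
  have hgderiv : ∀ t : ℝ, HasDerivAt g (2 * ⟪q t, deriv q t⟫) t := by
    intro t
    have h := ((hq t).hasDerivAt).inner ℝ ((hq t).hasDerivAt)
    have : ⟪q t, deriv q t⟫ + ⟪deriv q t, q t⟫ = 2 * ⟪q t, deriv q t⟫ := by
      rw [real_inner_comm (deriv q t) (q t)]; ring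
    rwa [this] at h
  have hgcont : Continuous g :=
    continuous_iff_continuousAt.mpr fun t => (hgderiv t).continuousAt
  have hgnorm : ∀ t : ℝ, g t = ‖q t‖ ^ 2 := fun t =>
    real_inner_self_eq_norm_sq (q t)
  -- main claim: g t ≤ r ^ 2 for t ≥ 0
  have key : ∀ t : ℝ, 0 ≤ t → g t ≤ r ^ 2 := by
    intro t₀ ht₀
    by_contra hcon
    push_neg at hcon
    set S : Set ℝ := {t | t ∈ Set.Icc 0 t₀ ∧ g t ≤ r ^ 2} with hS
    have h0S : (0 : ℝ) ∈ S := by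
      refine ⟨⟨le_refl 0, ht₀⟩, ?_⟩
      rw [hgnorm]
      exact pow_le_pow_left₀ (norm_nonneg _) h0 2
    have hSbdd : BddAbove S := BddAbove.mono (fun x hx => hx.1) bddAbove_Icc
    set s : ℝ := sSup S with hs
    have hSclosed : IsClosed S := by
      have : S = Set.Icc 0 t₀ ∩ g ⁻¹' (Set.Iic (r ^ 2)) := by
        ext x; simp [hS, Set.mem_Icc, and_assoc]
      rw [this]
      exact isClosed_Icc.inter (isClosed_Iic.preimage hgcont)
    have hsS : s ∈ S := hSclosed.csSup_mem ⟨0, h0S⟩ hSbdd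
    have hs0 : 0 ≤ s := hsS.1.1
    have hst₀ : s ≤ t₀ := hsS.1.2
    have hslt : s < t₀ := lt_of_le_of_ne hst₀ (fun he =>
      absurd hsS.2 (by rw [he]; exact not_le.mpr hcon))
    -- on (s, t₀], g > r ^ 2
    have hgt : ∀ x ∈ Set.Ioc s t₀, r ^ 2 < g x := by
      intro x hx
      by_contra hle
      push_neg at hle
      have : x ∈ S := ⟨⟨hs0.trans hx.1.le, hx.2⟩, hle⟩
      exact absurd (le_csSup hSbdd this) (not_le.mpr hx.1)
    -- deriv g < 0 on (s, t₀)
    have hderivneg : ∀ x ∈ Set.Ioo s t₀, deriv g x < 0 := by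
      intro x hx
      have hx0 : 0 ≤ x := hs0.trans hx.1.le
      have hqx : r < ‖q x‖ := by
        have := hgt x ⟨hx.1, hx.2.le⟩
        rw [hgnorm] at this
        nlinarith [norm_nonneg (q x)]
      have hqxpos : 0 < ‖q x‖ := lt_of_le_of_lt hr0 hqx
      have hneg : (δtilde - σlow * ‖q x‖) * ‖q x‖ < 0 := by
        apply mul_neg_of_neg_of_pos _ hqxpos
        nlinarith
      have := hineq x hx0
      rw [(hgderiv x).deriv]
      nlinarith
    -- g is antitone on [s, t₀]
    have hanti : StrictAntiOn g (Set.Icc s t₀) := by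
      apply strictAntiOn_of_deriv_neg (convex_Icc s t₀) (hgcont.continuousOn)
      intro x hx
      rw [interior_Icc] at hx
      exact hderivneg x hx
    have := hanti ⟨le_refl s, hst₀⟩ ⟨hslt.le, le_refl t₀⟩ hslt
    have := hgt t₀ ⟨hslt, le_refl t₀⟩
    have := hsS.2
    linarith
  intro t ht
  have := key t ht
  rw [hgnorm] at this
  nlinarith [norm_nonneg (q t)]
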